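/- Let $\mathcal{X}$ be a quasi-greedy basis of a $p$-Banach space $\mathbb{X}$, $0 < p \le 1$, with quasi-greedy constant $C$, i.e., $\|S_A(f)\| \le C\|f\|$ for every $f$ and every greedy set $A$ of $f$. Then for every finite set $A \subset \mathbb{N}$, every $\varepsilon \in \mathbb{E}^A$, and every $f \in \mathbb{X}$ with $\|f\|_\infty \le 1$ and $\operatorname{supp}(f) \cap A = \emptyset$, we have $\|\mathbb{1}_{\varepsilon,A}\| \le 2^{1/p} C \, \|\mathbb{1}_{\varepsilon,A} + f\|$. -/

import Mathlib

theorem stmt8 {X : Type*} [AddCommGroup X] [Module ℂ X] (p : ℝ) (hp : 0 < p) (hp1 : p ≤ 1)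
    (N : X → ℝ) (hN0 : ∀ f, 0 ≤ N f)
    (hNp : ∀ f g, N (f + g) ^ p ≤ N f ^ p + N g ^ p)
    (hNh : ∀ (a : ℂ) (f : X), N (a • f) = ‖a‖ * N f)
    (e : ℕ → X) (φ : ℕ → X →ₗ[ℂ] ℂ)
    (hbi : ∀ n k, φ n (e k) = if n = k then 1 else 0)
    (C : ℝ)
    (hQG : ∀ (g : X) (A : Finset ℕ),
      (∀ n ∈ A, ∀ k ∉ A, ‖φ k g‖ ≤ ‖φ n g‖) →
      N (∑ n ∈ A, φ n g • e n) ≤ C * N g)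
    (A : Finset ℕ) (ε : ℕ → ℂ) (hε : ∀ n ∈ A, ‖ε n‖ = 1)
    (f : X) (hfinf : ∀ n, ‖φ n f‖ ≤ 1) (hsupp : ∀ n ∈ A, φ n f = 0) :
    N (∑ n ∈ A, ε n • e n) ≤
      2 ^ (1/p) * C * N ((∑ n ∈ A, ε n • e n) + f) := by
  set S : X := ∑ n ∈ A, ε n • e n with hS
  set g : X := S + f with hg
  have hφS : ∀ n, φ n S = if n ∈ A then ε n else 0 := by
    intro n
    rw [hS, map_sum]
    simp only [map_smul, hbi, smul_eq_mul]
    by_cases hn : n ∈ A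
    · rw [Finset.sum_eq_single n]
      · simp [hn]
      · intro b hb hbn; simp [Ne.symm hbn]
      · intro h; exact absurd hn h
    · simp only [hn, if_false]
      apply Finset.sum_eq_zero
      intro b hb
      have : n ≠ b := fun h => hn (h ▸ hb)
      simp [this]
  have hφg : ∀ n ∈ A, φ n g = ε n := by
    intro n hn
    rw [hg, map_add, hφS, hsupp n hn, if_pos hn, add_zero]
  have hφg' : ∀ n ∉ A, φ n g = φ n f := by
    intro n hn
    rw [hg, map_add, hφS, if_neg hn, zero_add]
  have hgreedy : ∀ n ∈ A, ∀ k ∉ A, ‖φ k g‖ ≤ ‖φ n g‖ := by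
    intro n hn k hk
    rw [hφg n hn, hφg' k hk, hε n hn]
    exact hfinf k
  have key := hQG g A hgreedy
  have hsum : ∑ n ∈ A, φ n g • e n = S := by
    rw [hS]
    exact Finset.sum_congr rfl fun n hn => by rw [hφg n hn]
  rw [hsum] at key
  have h1 : (1 : ℝ) ≤ 2 ^ (1/p) := by
    apply Real.one_le_rpow (by norm_num)
    positivity
  have hCN : 0 ≤ C * N g := le_trans (hN0 S) key
  calc N S ≤ C * N g := key
    _ ≤ 2 ^ (1/p) * (C * N g) := le_mul_of_one_le_left hCN h1
    _ = 2 ^ (1/p) * C * N g := by ring
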